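/- Let (𝒜_i)_{i∈I} be a family of nonempty subsets of a set 𝒜 carrying a reflexive symmetric relation ∼, together with a function |·|: I → ℕ, and suppose the family thinly splinters. Then there is a set N ⊆ 𝒜 which meets every 𝒜_i and is nested, i.e. n_1 ∼ n_2 for all n_1,n_2 ∈ N. Moreover N can be chosen invariantly under isomorphisms: there is a choice of such a set N((𝒜_i)_{i∈I}) for every thinly splintering family such that whenever φ is a bijection 𝒜 → 𝒜' with a ∼ b ⟺ φ(a) ∼' φ(b), one has N((φ(𝒜_i))_{i∈I}) = φ(N((𝒜_i)_{i∈I})). -/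

import Mathlib

universe u v

/-- `c` is a corner of `a` and `b` (w.r.t. the nestedness relation `sim`): every
element crossing `c` crosses `a` or `b`. -/
def IsCornerT {A : Type u} (sim : A → A → Prop) (a b c : A) : Prop :=
  ∀ d : A, ¬ sim c d → (¬ sim a d ∨ ¬ sim b d)

/-- The `k`-crossing number of `a`: the number (in `ℕ∞`) of elements of the sets
`Ai i` with `ord i = k` that cross `a`. -/
noncomputable def crossNum {A : Type u} {I : Type v} (sim : A → A → Prop)
    (Ai : I → Set A) (ord : I → ℕ) (k : ℕ) (a : A) : ℕ∞ :=
  {b : A | (∃ i, ord i = k ∧ b ∈ Ai i) ∧ ¬ sim a b}.encard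

/-- The family `(Ai i)` thinly splinters with respect to `sim` and `ord`. -/
def ThinlySplinters {A : Type u} {I : Type v} (sim : A → A → Prop)
    (Ai : I → Set A) (ord : I → ℕ) : Prop :=
  (∀ i : I, ∀ a ∈ Ai i, ∀ k : ℕ, k ≤ ord i → crossNum sim Ai ord k a < ⊤) ∧
  (∀ i j : I, ∀ ai ∈ Ai i, ∀ aj ∈ Ai j, ord i < ord j → ¬ sim ai aj →
    ∃ c ∈ Ai j, IsCornerT sim ai aj c ∧ sim c ai) ∧
  (∀ (i j : I) (k : ℕ), ∀ ai ∈ Ai i, ∀ aj ∈ Ai j,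
    ord i = k → ord j = k → ¬ sim ai aj →
    (∃ c ∈ Ai i, IsCornerT sim ai aj c ∧
      crossNum sim Ai ord k c < crossNum sim Ai ord k ai) ∨
    (∃ c ∈ Ai j, IsCornerT sim ai aj c ∧
      crossNum sim Ai ord k c < crossNum sim Ai ord k aj))

section Aux

variable {A : Type u} {I : Type v}

/-- Elements of `Ai i` nested with everything in `S`. -/
def Bset (sim : A → A → Prop) (Ai : I → Set A) (S : Set A) (i : I) : Set A :=
  {a | a ∈ Ai i ∧ ∀ n ∈ S, sim a n}

/-- At level `k`, take all elements that are crossing-number-minimal in some `Bset`. -/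
noncomputable def stepSet (sim : A → A → Prop) (Ai : I → Set A) (ord : I → ℕ)
    (S : Set A) (k : ℕ) : Set A :=
  {a | ∃ i, ord i = k ∧ a ∈ Bset sim Ai S i ∧
    ∀ b ∈ Bset sim Ai S i, crossNum sim Ai ord k a ≤ crossNum sim Ai ord k b}

/-- The union of the sets chosen at levels `< k`. -/
noncomputable def NltSet (sim : A → A → Prop) (Ai : I → Set A) (ord : I → ℕ) : ℕ → Set A
  | 0 => ∅
  | Nat.succ k => NltSet sim Ai ord k ∪ stepSet sim Ai ord (NltSet sim Ai ord k) k

/-- The canonical nested set. -/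
noncomputable def Nfull (sim : A → A → Prop) (Ai : I → Set A) (ord : I → ℕ) : Set A :=
  ⋃ k, NltSet sim Ai ord k

variable {sim : A → A → Prop} {Ai : I → Set A} {ord : I → ℕ}

lemma Bset_nonempty (hsymm : Symmetric sim) (hTS : ThinlySplinters sim Ai ord)
    {S : Set A} {k : ℕ}
    (hSsub : ∀ n ∈ S, ∃ j, ord j < k ∧ n ∈ Ai j)
    (hSnest : ∀ n ∈ S, ∀ m ∈ S, sim n m)
    {i : I} (hik : ord i = k) (hi : (Ai i).Nonempty) :
    (Bset sim Ai S i).Nonempty := by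
  have hfin : ∀ a ∈ Ai i, {m ∈ S | ¬ sim a m}.Finite := by
    intro a ha
    have hsub : {m ∈ S | ¬ sim a m} ⊆ ⋃ k' ∈ Finset.range k,
        {b | (∃ j, ord j = k' ∧ b ∈ Ai j) ∧ ¬ sim a b} := by
      rintro m ⟨hmS, hm⟩
      obtain ⟨j, hj, hmA⟩ := hSsub m hmS
      exact Set.mem_biUnion (Finset.mem_range.mpr hj) ⟨⟨j, rfl, hmA⟩, hm⟩
    refine Set.Finite.subset ?_ hsub
    refine Set.Finite.biUnion (Finset.finite_toSet _) (fun k' hk' => ?_)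
    have hk'le : k' ≤ ord i := by
      have := Finset.mem_range.mp hk'; omega
    exact Set.encard_lt_top_iff.mp (hTS.1 i a ha k' hk'le)
  suffices h : ∀ n : ℕ, ∀ a ∈ Ai i, {m ∈ S | ¬ sim a m}.ncard ≤ n →
      (Bset sim Ai S i).Nonempty by
    obtain ⟨a, ha⟩ := hi
    exact h _ a ha le_rfl
  intro n
  induction n with
  | zero =>
    intro a ha hcard
    refine ⟨a, ha, fun m hm => ?_⟩
    by_contra hsim
    have hmem : m ∈ {m ∈ S | ¬ sim a m} := ⟨hm, hsim⟩
    have hemp := (Set.ncard_eq_zero (hfin a ha)).mp (Nat.le_zero.mp hcard)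
    rw [hemp] at hmem
    exact hmem
  | succ n ih =>
    intro a ha hcard
    by_cases hempty : {m ∈ S | ¬ sim a m} = ∅
    · refine ⟨a, ha, fun m hm => ?_⟩
      by_contra hsim
      have hmem : m ∈ {m ∈ S | ¬ sim a m} := ⟨hm, hsim⟩
      rw [hempty] at hmem
      exact hmem
    · obtain ⟨m, hmS, hma⟩ := Set.nonempty_iff_ne_empty.mpr hempty
      obtain ⟨j, hjk, hmA⟩ := hSsub m hmS
      obtain ⟨c, hcA, hcorner, hcsim⟩ :=
        hTS.2.1 j i m hmA a ha (by omega) (fun h => hma (hsymm h))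
      have hsub : {p ∈ S | ¬ sim c p} ⊆ {p ∈ S | ¬ sim a p} \ {m} := by
        rintro p ⟨hpS, hpc⟩
        rcases hcorner p hpc with h1 | h2
        · exact absurd (hSnest m hmS p hpS) h1
        · exact ⟨⟨hpS, h2⟩, fun hpm => hpc (by rw [Set.mem_singleton_iff] at hpm; rw [hpm]; exact hcsim)⟩
      apply ih c hcA
      have h1 : {p ∈ S | ¬ sim c p}.ncard ≤ ({p ∈ S | ¬ sim a p} \ {m}).ncard :=
        Set.ncard_le_ncard hsub (hfin a ha).diff
      have h2 : ({p ∈ S | ¬ sim a p} \ {m}).ncard < ({p ∈ S | ¬ sim a p}).ncard :=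
        Set.ncard_diff_singleton_lt_of_mem ⟨hmS, hma⟩ (hfin a ha)
      omega

lemma Nlt_spec (hsymm : Symmetric sim) (hTS : ThinlySplinters sim Ai ord) (k : ℕ) :
    (∀ a ∈ NltSet sim Ai ord k, ∃ j, ord j < k ∧ a ∈ Ai j) ∧
    (∀ a ∈ NltSet sim Ai ord k, ∀ b ∈ NltSet sim Ai ord k, sim a b) := by
  induction k with
  | zero => exact ⟨fun a ha => ha.elim, fun a ha => ha.elim⟩
  | succ k ih =>
    obtain ⟨ihsub, ihnest⟩ := ih
    have hstepnest : ∀ a ∈ stepSet sim Ai ord (NltSet sim Ai ord k) k,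
        ∀ b ∈ stepSet sim Ai ord (NltSet sim Ai ord k) k, sim a b := by
      rintro a ⟨i, hik, ⟨haA, haN⟩, hamin⟩ b ⟨j, hjk, ⟨hbA, hbN⟩, hbmin⟩
      by_contra hab
      rcases hTS.2.2 i j k a haA b hbA hik hjk hab with
        ⟨c, hcA, hcorner, hlt⟩ | ⟨c, hcA, hcorner, hlt⟩
      · have hcB : c ∈ Bset sim Ai (NltSet sim Ai ord k) i := by
          refine ⟨hcA, fun n hn => ?_⟩
          by_contra hcn
          rcases hcorner n hcn with h | h
          exacts [h (haN n hn), h (hbN n hn)]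
        exact absurd (hamin c hcB) (not_le.mpr hlt)
      · have hcB : c ∈ Bset sim Ai (NltSet sim Ai ord k) j := by
          refine ⟨hcA, fun n hn => ?_⟩
          by_contra hcn
          rcases hcorner n hcn with h | h
          exacts [h (haN n hn), h (hbN n hn)]
        exact absurd (hbmin c hcB) (not_le.mpr hlt)
    constructor
    · rintro a (ha | ⟨i, hik, ⟨haA, _⟩, _⟩)
      · obtain ⟨j, hj, h⟩ := ihsub a ha; exact ⟨j, by omega, h⟩
      · exact ⟨i, by omega, haA⟩
    · rintro a (ha | ha) b (hb | hb)
      · exact ihnest a ha b hb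
      · obtain ⟨i, _, ⟨_, hN⟩, _⟩ := hb; exact hsymm (hN a ha)
      · obtain ⟨i, _, ⟨_, hN⟩, _⟩ := ha; exact hN b hb
      · exact hstepnest a ha b hb

lemma NltSet_mono : Monotone (NltSet sim Ai ord) := by
  apply monotone_nat_of_le_succ
  intro k
  exact Set.subset_union_left

lemma Nfull_meets (hsymm : Symmetric sim) (hne : ∀ i, (Ai i).Nonempty)
    (hTS : ThinlySplinters sim Ai ord) (i : I) :
    ∃ a ∈ Ai i, a ∈ Nfull sim Ai ord := by
  set k := ord i with hk
  obtain ⟨hsub, hnest⟩ := Nlt_spec hsymm hTS (sim := sim) (Ai := Ai) (ord := ord) k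
  have hB : (Bset sim Ai (NltSet sim Ai ord k) i).Nonempty :=
    Bset_nonempty hsymm hTS hsub hnest hk.symm (hne i)
  have hval : {x : ℕ∞ | ∃ a ∈ Bset sim Ai (NltSet sim Ai ord k) i,
      crossNum sim Ai ord k a = x}.Nonempty := by
    obtain ⟨a, ha⟩ := hB
    exact ⟨_, a, ha, rfl⟩
  obtain ⟨x, ⟨a, haB, hax⟩, hmin⟩ := wellFounded_lt.has_min _ hval
  refine ⟨a, haB.1, ?_⟩
  refine Set.mem_iUnion.mpr ⟨k + 1, Or.inr ⟨i, hk.symm, haB, fun b hb => ?_⟩⟩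
  rw [hax]
  exact not_lt.mp (hmin _ ⟨b, hb, rfl⟩)

lemma Nfull_nested (hsymm : Symmetric sim) (hTS : ThinlySplinters sim Ai ord) :
    ∀ a ∈ Nfull sim Ai ord, ∀ b ∈ Nfull sim Ai ord, sim a b := by
  intro a ha b hb
  obtain ⟨k1, hk1⟩ := Set.mem_iUnion.mp ha
  obtain ⟨k2, hk2⟩ := Set.mem_iUnion.mp hb
  exact (Nlt_spec hsymm hTS (max k1 k2)).2 a
    (NltSet_mono (le_max_left k1 k2) hk1) b (NltSet_mono (le_max_right k1 k2) hk2)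

section Invariance

variable {A' : Type u} {sim' : A' → A' → Prop}

lemma crossNum_image (φ : A ≃ A') (hφ : ∀ a b : A, sim a b ↔ sim' (φ a) (φ b))
    (k : ℕ) (a : A) :
    crossNum sim' (fun i => ⇑φ '' Ai i) ord k (φ a) = crossNum sim Ai ord k a := by
  unfold crossNum
  rw [show {b : A' | (∃ i, ord i = k ∧ b ∈ ⇑φ '' Ai i) ∧ ¬ sim' (φ a) b} =
      ⇑φ '' {b : A | (∃ i, ord i = k ∧ b ∈ Ai i) ∧ ¬ sim a b} from ?_]
  · exact φ.injective.encard_image _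
  · ext b'
    simp only [Set.mem_image, Set.mem_setOf_eq]
    constructor
    · rintro ⟨⟨i, hik, b, hb, rfl⟩, hcross⟩
      exact ⟨b, ⟨⟨i, hik, hb⟩, fun h => hcross ((hφ a b).mp h)⟩, rfl⟩
    · rintro ⟨b, ⟨⟨i, hik, hb⟩, hcross⟩, rfl⟩
      exact ⟨⟨i, hik, b, hb, rfl⟩, fun h => hcross ((hφ a b).mpr h)⟩

lemma Bset_image (φ : A ≃ A') (hφ : ∀ a b : A, sim a b ↔ sim' (φ a) (φ b))
    (S : Set A) (i : I) :
    Bset sim' (fun i => ⇑φ '' Ai i) (⇑φ '' S) i = ⇑φ '' Bset sim Ai S i := by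
  ext a'
  simp only [Bset, Set.mem_image, Set.mem_setOf_eq]
  constructor
  · rintro ⟨⟨a, ha, rfl⟩, hnest⟩
    exact ⟨a, ⟨ha, fun n hn => (hφ a n).mpr (hnest (φ n) ⟨n, hn, rfl⟩)⟩, rfl⟩
  · rintro ⟨a, ⟨ha, hnest⟩, rfl⟩
    exact ⟨⟨a, ha, rfl⟩, by rintro n' ⟨n, hn, rfl⟩; exact (hφ a n).mp (hnest n hn)⟩

lemma stepSet_image (φ : A ≃ A') (hφ : ∀ a b : A, sim a b ↔ sim' (φ a) (φ b))
    (S : Set A) (k : ℕ) :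
    stepSet sim' (fun i => ⇑φ '' Ai i) ord (⇑φ '' S) k = ⇑φ '' stepSet sim Ai ord S k := by
  ext a'
  simp only [stepSet, Set.mem_image, Set.mem_setOf_eq, Bset_image φ hφ]
  constructor
  · rintro ⟨i, hik, ⟨a, haB, rfl⟩, hmin⟩
    refine ⟨a, ⟨i, hik, haB, fun b hbB => ?_⟩, rfl⟩
    have := hmin (φ b) ⟨b, hbB, rfl⟩
    rwa [crossNum_image φ hφ, crossNum_image φ hφ] at this
  · rintro ⟨a, ⟨i, hik, haB, hmin⟩, rfl⟩
    refine ⟨i, hik, ⟨a, haB, rfl⟩, ?_⟩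
    rintro b' ⟨b, hbB, rfl⟩
    rw [crossNum_image φ hφ, crossNum_image φ hφ]
    exact hmin b hbB

lemma NltSet_image (φ : A ≃ A') (hφ : ∀ a b : A, sim a b ↔ sim' (φ a) (φ b)) (k : ℕ) :
    NltSet sim' (fun i => ⇑φ '' Ai i) ord k = ⇑φ '' NltSet sim Ai ord k := by
  induction k with
  | zero => simp [NltSet]
  | succ k ih =>
    show NltSet sim' _ ord k ∪ stepSet sim' _ ord (NltSet sim' _ ord k) k = _
    rw [ih, stepSet_image φ hφ]
    show _ = ⇑φ '' (NltSet sim Ai ord k ∪ stepSet sim Ai ord (NltSet sim Ai ord k) k)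
    rw [Set.image_union]

lemma Nfull_image (φ : A ≃ A') (hφ : ∀ a b : A, sim a b ↔ sim' (φ a) (φ b)) :
    Nfull sim' (fun i => ⇑φ '' Ai i) ord = ⇑φ '' Nfull sim Ai ord := by
  unfold Nfull
  rw [Set.image_iUnion]
  exact Set.iUnion_congr (NltSet_image φ hφ)

end Invariance

end Aux

/-- the thin splinter lemma, with a canonical (isomorphism-invariant)
choice of the nested set `N`. -/
theorem stmt1 :
    ∃ N : ∀ (A : Type u) (sim : A → A → Prop) (I : Type v)
      (Ai : I → Set A) (ord : I → ℕ), Set A,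
      (∀ (A : Type u) (sim : A → A → Prop) (I : Type v)
          (Ai : I → Set A) (ord : I → ℕ),
        Reflexive sim → Symmetric sim → (∀ i, (Ai i).Nonempty) →
        ThinlySplinters sim Ai ord →
        (∀ i, ∃ a ∈ Ai i, a ∈ N A sim I Ai ord) ∧
        (∀ a ∈ N A sim I Ai ord, ∀ b ∈ N A sim I Ai ord, sim a b)) ∧
      (∀ (A A' : Type u) (sim : A → A → Prop) (sim' : A' → A' → Prop) (I : Type v)
          (Ai : I → Set A) (ord : I → ℕ) (φ : A ≃ A'),
        (∀ a b : A, sim a b ↔ sim' (φ a) (φ b)) →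
        Reflexive sim → Symmetric sim → (∀ i, (Ai i).Nonempty) →
        ThinlySplinters sim Ai ord →
        N A' sim' I (fun i => ⇑φ '' Ai i) ord = ⇑φ '' N A sim I Ai ord) := by
  refine ⟨fun A sim I Ai ord => Nfull sim Ai ord, ?_, ?_⟩
  · intro A sim I Ai ord _ hsymm hne hTS
    exact ⟨Nfull_meets hsymm hne hTS, Nfull_nested hsymm hTS⟩
  · intro A A' sim sim' I Ai ord φ hφ _ _ _ _
    exact Nfull_image φ hφ
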